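/- For a univariate random variable X with continuous distribution function F and finite first moment, E|X1 - X2| = 2 E[X (2F(X) - 1)], where X1, X2 are independent copies of X; i.e., the Gini mean difference equals twice the covariance of X with the centered rank function r(X) = 2F(X) - 1. -/

import Mathlib

open MeasureTheory

/-- A sign function: `1` on positives, `-1` on negatives, `0` at `0`. -/
noncomputable def mySgn (a : ℝ) : ℝ :=
  (Set.Ioi (0:ℝ)).indicator (fun _ => 1) a - (Set.Iio (0:ℝ)).indicator (fun _ => 1) a

lemma mySgn_measurable : Measurable mySgn :=
  (measurable_const.indicator measurableSet_Ioi).sub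
    (measurable_const.indicator measurableSet_Iio)

lemma abs_eq_mul_mySgn (a : ℝ) : |a| = a * mySgn a := by
  rcases lt_trichotomy a 0 with h | h | h
  · simp [mySgn, Set.indicator_apply, h, not_lt.2 h.le, abs_of_neg h]
  · simp [mySgn, h]
  · simp [mySgn, Set.indicator_apply, h, not_lt.2 h.le, abs_of_pos h]

lemma mySgn_neg (a : ℝ) : mySgn (-a) = - mySgn a := by
  rcases lt_trichotomy a 0 with h | h | h
  · simp [mySgn, Set.indicator_apply, h, not_lt.2 h.le, neg_pos.2 h, not_lt.2 (neg_pos.2 h).le]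
  · simp [mySgn, h]
  · simp [mySgn, Set.indicator_apply, h, not_lt.2 h.le, neg_neg_iff_pos.2 h,
      not_lt.2 (neg_lt_zero.2 h).le, neg_lt_zero.2 h]

lemma abs_mySgn_le (a : ℝ) : |mySgn a| ≤ 1 := by
  rcases lt_trichotomy a 0 with h | h | h
  · simp [mySgn, Set.indicator_apply, h, not_lt.2 h.le]
  · simp [mySgn, h]
  · simp [mySgn, Set.indicator_apply, h, not_lt.2 h.le]

lemma mySgn_sub_eq (x y : ℝ) :
    mySgn (x - y) =
      (Set.Iio x).indicator (fun _ => (1:ℝ)) y - (Set.Ioi x).indicator (fun _ => (1:ℝ)) y := by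
  simp only [mySgn, Set.indicator_apply, Set.mem_Ioi, Set.mem_Iio, sub_pos, sub_neg]

/-- For a univariate random variable with continuous distribution function `F` and finite
first moment, `E|X₁ - X₂| = 2 E[X (2F(X) - 1)]`: the Gini mean difference equals twice
the covariance of `X` with the centered rank function `r(x) = 2F(x) - 1`. -/
theorem gini_eq_two_cov_centered_rank
    (ν : Measure ℝ) [IsProbabilityMeasure ν]
    (F : ℝ → ℝ) (hF : ∀ x, F x = (ν (Set.Iic x)).toReal)
    (hFcont : Continuous F)
    (hint : Integrable (fun x => x) ν) :
    ∫ p : ℝ × ℝ, |p.1 - p.2| ∂(ν.prod ν) =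
      2 * ∫ x, x * (2 * F x - 1) ∂ν := by
  -- Step 1: no atoms.
  have hatom : ∀ x : ℝ, ν {x} = 0 := by
    intro x
    have hle : ∀ δ : ℝ, 0 < δ → (ν {x}).toReal ≤ F x - F (x - δ) := by
      intro δ hδ
      have hsub : {x} ⊆ Set.Iic x \ Set.Iic (x - δ) := by
        intro y hy
        rcases Set.mem_singleton_iff.1 hy with rfl
        exact ⟨Set.mem_Iic.2 le_rfl, by simp; linarith⟩
      have hss : Set.Iic (x - δ) ⊆ Set.Iic x := Set.Iic_subset_Iic.2 (by linarith)
      have h2 : ν (Set.Iic x \ Set.Iic (x - δ)) = ν (Set.Iic x) - ν (Set.Iic (x - δ)) :=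
        measure_diff hss measurableSet_Iic.nullMeasurableSet (measure_ne_top ν _)
      have h1 : (ν {x}).toReal ≤ (ν (Set.Iic x \ Set.Iic (x - δ))).toReal :=
        ENNReal.toReal_mono (measure_ne_top ν _) (measure_mono hsub)
      rw [h2, ENNReal.toReal_sub_of_le (measure_mono hss) (measure_ne_top ν _)] at h1
      rw [hF x, hF (x - δ)]
      exact h1
    have h0 : (ν {x}).toReal ≤ 0 := by
      have hc : Continuous fun δ : ℝ => F x - F (x - δ) :=
        continuous_const.sub (hFcont.comp (continuous_const.sub continuous_id))
      have ht : Filter.Tendsto (fun δ : ℝ => F x - F (x - δ))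
          (nhdsWithin 0 (Set.Ioi 0)) (nhds 0) := by
        have h := hc.tendsto 0
        simp only [sub_zero, sub_self] at h
        exact h.mono_left nhdsWithin_le_nhds
      exact ge_of_tendsto ht
        (Filter.eventually_of_mem self_mem_nhdsWithin fun δ hδ => hle δ hδ)
    have hzero : (ν {x}).toReal = 0 := le_antisymm h0 ENNReal.toReal_nonneg
    exact ((ENNReal.toReal_eq_zero_iff _).1 hzero).resolve_right (measure_ne_top ν _)
  -- Step 2: the inner integral of the sign kernel.
  have hIio : ∀ x : ℝ, (ν (Set.Iio x)).toReal = F x := by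
    intro x
    rw [hF x]
    congr 1
    refine le_antisymm (measure_mono Set.Iio_subset_Iic_self) ?_
    rw [← Set.Iio_union_right]
    exact (measure_union_le _ _).trans (by simp [hatom x])
  have hIoi : ∀ x : ℝ, (ν (Set.Ioi x)).toReal = 1 - F x := by
    intro x
    rw [← Set.compl_Iic, prob_compl_eq_one_sub measurableSet_Iic,
      ENNReal.toReal_sub_of_le prob_le_one ENNReal.one_ne_top, ENNReal.toReal_one, hF x]
  have hindIio : ∀ x : ℝ, Integrable ((Set.Iio x).indicator fun _ => (1:ℝ)) ν :=
    fun x => (integrable_const (1:ℝ)).indicator measurableSet_Iio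
  have hindIoi : ∀ x : ℝ, Integrable ((Set.Ioi x).indicator fun _ => (1:ℝ)) ν :=
    fun x => (integrable_const (1:ℝ)).indicator measurableSet_Ioi
  have hg : ∀ x : ℝ, ∫ y, mySgn (x - y) ∂ν = 2 * F x - 1 := by
    intro x
    have : (fun y => mySgn (x - y)) =
        fun y => (Set.Iio x).indicator (fun _ => (1:ℝ)) y
          - (Set.Ioi x).indicator (fun _ => (1:ℝ)) y := by
      funext y; exact mySgn_sub_eq x y
    rw [this, integral_sub (hindIio x) (hindIoi x),
      integral_indicator_const (1:ℝ) measurableSet_Iio,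
      integral_indicator_const (1:ℝ) measurableSet_Ioi, smul_eq_mul, smul_eq_mul,
      mul_one, mul_one, measureReal_def, measureReal_def, hIio x, hIoi x]
    ring
  -- Step 3: integrability on the product space.
  have hfstm : Measurable fun p : ℝ × ℝ => p.1 := measurable_fst
  have hfst : Integrable (fun p : ℝ × ℝ => p.1) (ν.prod ν) := by
    rw [integrable_prod_iff hfstm.aestronglyMeasurable]
    refine ⟨Filter.Eventually.of_forall fun x => integrable_const x, ?_⟩
    simpa [integral_const] using hint.norm
  have hm1 : Measurable fun p : ℝ × ℝ => p.1 * mySgn (p.1 - p.2) :=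
    measurable_fst.mul (mySgn_measurable.comp (measurable_fst.sub measurable_snd))
  have hf1 : Integrable (fun p : ℝ × ℝ => p.1 * mySgn (p.1 - p.2)) (ν.prod ν) := by
    refine hfst.mono hm1.aestronglyMeasurable (Filter.Eventually.of_forall fun p => ?_)
    rw [Real.norm_eq_abs, Real.norm_eq_abs, abs_mul]
    calc |p.1| * |mySgn (p.1 - p.2)| ≤ |p.1| * 1 :=
          mul_le_mul_of_nonneg_left (abs_mySgn_le _) (abs_nonneg _)
      _ = |p.1| := mul_one _
  have hf2 : Integrable (fun p : ℝ × ℝ => p.2 * mySgn (p.2 - p.1)) (ν.prod ν) := by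
    have := (Measure.measurePreserving_swap (μ := ν) (ν := ν)).integrable_comp
      hm1.aestronglyMeasurable
    exact this.2 hf1
  -- Step 4: pointwise decomposition of the absolute value.
  have habs : ∀ p : ℝ × ℝ,
      |p.1 - p.2| = p.1 * mySgn (p.1 - p.2) + p.2 * mySgn (p.2 - p.1) := by
    intro p
    rw [show p.2 - p.1 = -(p.1 - p.2) by ring, mySgn_neg, abs_eq_mul_mySgn (p.1 - p.2)]
    ring
  -- Step 5: put everything together.
  have hswap : ∫ p : ℝ × ℝ, p.2 * mySgn (p.2 - p.1) ∂(ν.prod ν)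
      = ∫ p : ℝ × ℝ, p.1 * mySgn (p.1 - p.2) ∂(ν.prod ν) := by
    exact integral_prod_swap (fun p : ℝ × ℝ => p.1 * mySgn (p.1 - p.2))
  have hmain : ∫ p : ℝ × ℝ, p.1 * mySgn (p.1 - p.2) ∂(ν.prod ν)
      = ∫ x, x * (2 * F x - 1) ∂ν := by
    rw [integral_prod _ hf1]
    refine integral_congr_ae (Filter.Eventually.of_forall fun x => ?_)
    simp only
    rw [integral_const_mul, hg x]
  calc ∫ p : ℝ × ℝ, |p.1 - p.2| ∂(ν.prod ν)
      = ∫ p : ℝ × ℝ, (p.1 * mySgn (p.1 - p.2) + p.2 * mySgn (p.2 - p.1)) ∂(ν.prod ν) := by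
        refine integral_congr_ae (Filter.Eventually.of_forall fun p => habs p)
    _ = (∫ p : ℝ × ℝ, p.1 * mySgn (p.1 - p.2) ∂(ν.prod ν))
        + ∫ p : ℝ × ℝ, p.2 * mySgn (p.2 - p.1) ∂(ν.prod ν) := integral_add hf1 hf2
    _ = 2 * ∫ x, x * (2 * F x - 1) ∂ν := by rw [hswap, hmain]; ring
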